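/- Let m ≥ 1 and n ≥ 2m be integers and let X = X(k_0; k_1,…,k_l). For x ∈ J̃(n,m) and y ∈ X, put i_j = #{1 ≤ k ≤ n : x_k = 1 and y_k = (2−j) − k_0/n} for 1 ≤ j ≤ l. Then the squared Euclidean distance satisfies d(x,y)² = 4k_0 + 3m − 4n − k_0²/n + Σ_{j=1}^l j²·k_j + 2·Σ_{j=1}^l (j−1)·i_j. -/

import Mathlib

noncomputable section

/-- The set of distances between distinct points of `S`. -/
def distSet {n : ℕ} (S : Set (EuclideanSpace ℝ (Fin n))) : Set ℝ :=
  {d | ∃ x ∈ S, ∃ y ∈ S, x ≠ y ∧ d = dist x y}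

/-- `S` is an `s`-distance set: exactly `s` distances occur between distinct points. -/
def IsSDistanceSet {n : ℕ} (s : ℕ) (S : Set (EuclideanSpace ℝ (Fin n))) : Prop :=
  (distSet S).Finite ∧ (distSet S).ncard = s

/-- The representation `J̃(n,m)` of the Johnson graph `J(n,m)`. -/
def JohnsonRep (n m : ℕ) : Set (EuclideanSpace ℝ (Fin n)) :=
  {x | (∀ i, x i = 0 ∨ x i = 1) ∧ {i : Fin n | x i = 1}.ncard = m}

/-- The hyperplane `H(n,m) = {x : ∑ x_i = m}`. -/
def Hyp (n m : ℕ) : Set (EuclideanSpace ℝ (Fin n)) :=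
  {x | ∑ i, x i = (m : ℝ)}

/-- The set `X(k₀; k₁, …, k_l)`: vectors having, for each `1 ≤ j ≤ l`, exactly `k j`
coordinates equal to `(2 - j) - k₀/n`. -/
def XSet (n l : ℕ) (k0 : ℤ) (k : ℕ → ℕ) : Set (EuclideanSpace ℝ (Fin n)) :=
  {y | ∀ j ∈ Finset.Icc 1 l, {i : Fin n | y i = (2 - (j : ℝ)) - (k0 : ℝ) / n}.ncard = k j}

theorem dist_sq_formula (n m l : ℕ) (hm : 1 ≤ m) (hn : 2 * m ≤ n)
    (hl1 : 1 ≤ l) (hlm : l ≤ m) (k0 : ℤ) (k : ℕ → ℕ)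
    (hsum : (∑ j ∈ Finset.Icc 1 l, k j) = n)
    (hwsum : (∑ j ∈ Finset.Icc 1 l, (j : ℤ) * (k j : ℤ)) = 2 * n - k0 - m)
    (x : EuclideanSpace ℝ (Fin n)) (hx : x ∈ JohnsonRep n m)
    (y : EuclideanSpace ℝ (Fin n)) (hy : y ∈ XSet n l k0 k) :
    dist x y ^ 2 =
      4 * (k0 : ℝ) + 3 * m - 4 * n - (k0 : ℝ) ^ 2 / n +
        (∑ j ∈ Finset.Icc 1 l, (j : ℝ) ^ 2 * (k j : ℝ)) +
        2 * ∑ j ∈ Finset.Icc 1 l, ((j : ℝ) - 1) *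
          ({i : Fin n | x i = 1 ∧ y i = (2 - (j : ℝ)) - (k0 : ℝ) / n}.ncard : ℝ) := by
  classical
  replace hx : (∀ i, x i = 0 ∨ x i = 1) ∧ {i : Fin n | x i = 1}.ncard = m := hx
  replace hy : ∀ j ∈ Finset.Icc 1 l,
      {i : Fin n | y i = (2 - (j : ℝ)) - (k0 : ℝ) / n}.ncard = k j := hy
  obtain ⟨hx01, hxm⟩ := hx
  have hnpos : 0 < n := by omega
  have hnR : (n : ℝ) ≠ 0 := Nat.cast_ne_zero.mpr (by omega)
  set v : ℕ → ℝ := fun j => (2 - (j : ℝ)) - (k0 : ℝ) / n with hv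
  set B : ℕ → Finset (Fin n) := fun j => Finset.univ.filter (fun i => y i = v j) with hB
  set A : ℕ → Finset (Fin n) := fun j => (B j).filter (fun i => x i = 1) with hA
  have hBcard : ∀ j ∈ Finset.Icc 1 l, (B j).card = k j := by
    intro j hj
    have h := hy j hj
    rwa [show {i : Fin n | y i = (2 - (j:ℝ)) - (k0:ℝ)/n} = ↑(B j) by
        ext i; simp [hB, hv], Set.ncard_coe_finset] at h
  have hDis : ∀ j ∈ Finset.Icc 1 l, ∀ j' ∈ Finset.Icc 1 l, j ≠ j' → Disjoint (B j) (B j') := by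
    intro j _ j' _ hne
    rw [Finset.disjoint_left]
    intro i hi hi'
    simp only [hB, Finset.mem_filter, Finset.mem_univ, true_and] at hi hi'
    apply hne
    have : (j : ℝ) = j' := by
      have := hi.symm.trans hi'
      simp only [hv] at this
      linarith
    exact_mod_cast this
  have hpd : (↑(Finset.Icc 1 l) : Set ℕ).PairwiseDisjoint B := by
    intro j hj j' hj' hne
    exact hDis j (Finset.mem_coe.mp hj) j' (Finset.mem_coe.mp hj') hne
  have huniv : (Finset.Icc 1 l).biUnion B = Finset.univ := by
    apply Finset.eq_univ_of_card
    rw [Finset.card_biUnion hDis, Finset.sum_congr rfl hBcard, hsum, Fintype.card_fin]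
  -- a_j partition the support of x
  have hDisA : ∀ j ∈ Finset.Icc 1 l, ∀ j' ∈ Finset.Icc 1 l, j ≠ j' → Disjoint (A j) (A j') := by
    intro j hj j' hj' hne
    exact (hDis j hj j' hj' hne).mono (Finset.filter_subset _ _) (Finset.filter_subset _ _)
  have hxcard : (Finset.univ.filter (fun i => x i = 1)).card = m := by
    have h := hxm
    rwa [show {i : Fin n | x i = 1} = ↑(Finset.univ.filter (fun i => x i = 1)) by
        ext i; simp, Set.ncard_coe_finset] at h
  have hApart : (Finset.Icc 1 l).biUnion A = Finset.univ.filter (fun i => x i = 1) := by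
    ext i
    simp only [Finset.mem_biUnion, hA, Finset.mem_filter, Finset.mem_univ, true_and]
    constructor
    · rintro ⟨j, hj, hiB, hxi⟩; exact hxi
    · intro hxi
      have : i ∈ (Finset.Icc 1 l).biUnion B := huniv ▸ Finset.mem_univ i
      obtain ⟨j, hj, hiB⟩ := Finset.mem_biUnion.mp this
      exact ⟨j, hj, hiB, hxi⟩
  have hsumA : (∑ j ∈ Finset.Icc 1 l, ((A j).card : ℝ)) = m := by
    have : (Finset.Icc 1 l).sum (fun j => (A j).card) = m := by
      rw [← Finset.card_biUnion hDisA, hApart, hxcard]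
    exact_mod_cast this
  -- per class sum
  have hsumB : ∀ j ∈ Finset.Icc 1 l, (∑ i ∈ B j, (x i - y i) ^ 2)
      = (1 - v j) ^ 2 * ((A j).card : ℝ) + (v j) ^ 2 * ((k j : ℝ) - ((A j).card : ℝ)) := by
    intro j hj
    rw [← Finset.sum_filter_add_sum_filter_not (B j) (fun i => x i = 1)]
    have h1 : (∑ i ∈ (B j).filter (fun i => x i = 1), (x i - y i) ^ 2)
        = (1 - v j) ^ 2 * ((A j).card : ℝ) := by
      have hterm : ∀ i ∈ (B j).filter (fun i => x i = 1), (x i - y i) ^ 2 = (1 - v j) ^ 2 := by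
        intro i hi
        simp only [Finset.mem_filter, hB, Finset.mem_univ, true_and] at hi
        rw [hi.2, hi.1]
      rw [Finset.sum_congr rfl hterm, Finset.sum_const, nsmul_eq_mul, mul_comm]
    have hcard2 : ((((B j).filter (fun i => ¬ x i = 1)).card : ℝ)) = (k j : ℝ) - ((A j).card : ℝ) := by
      have h := Finset.card_filter_add_card_filter_not (s := B j) (p := fun i => x i = 1)
      rw [hBcard j hj] at h
      have : ((A j).card : ℝ) + (((B j).filter (fun i => ¬ x i = 1)).card : ℝ) = (k j : ℝ) := by
        have h' : (A j).card + ((B j).filter (fun i => ¬ x i = 1)).card = k j := h; exact_mod_cast h'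
      linarith
    have h2 : (∑ i ∈ (B j).filter (fun i => ¬ x i = 1), (x i - y i) ^ 2)
        = (v j) ^ 2 * ((k j : ℝ) - ((A j).card : ℝ)) := by
      have hterm : ∀ i ∈ (B j).filter (fun i => ¬ x i = 1), (x i - y i) ^ 2 = (v j) ^ 2 := by
        intro i hi
        simp only [Finset.mem_filter, hB, Finset.mem_univ, true_and] at hi
        have hx0 : x i = 0 := (hx01 i).resolve_right hi.2
        rw [hx0, hi.1]
        ring
      rw [Finset.sum_congr rfl hterm, Finset.sum_const, nsmul_eq_mul, hcard2, mul_comm]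
    rw [h1, h2]
  -- distance formula
  have hdist : dist x y ^ 2 = ∑ i : Fin n, (x i - y i) ^ 2 := by
    rw [EuclideanSpace.dist_eq, Real.sq_sqrt (Finset.sum_nonneg fun i _ => sq_nonneg _)]
    exact Finset.sum_congr rfl fun i _ => by rw [Real.dist_eq, sq_abs]
  rw [hdist, ← huniv, Finset.sum_biUnion hpd, Finset.sum_congr rfl hsumB]
  -- rewrite goal ncard via A
  have hAcard : ∀ j ∈ Finset.Icc 1 l,
      (({i : Fin n | x i = 1 ∧ y i = (2 - (j : ℝ)) - (k0 : ℝ) / n}.ncard : ℝ)) = ((A j).card : ℝ) := by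
    intro j hj
    congr 1
    rw [show {i : Fin n | x i = 1 ∧ y i = (2 - (j:ℝ)) - (k0:ℝ)/n} = ↑(A j) by
        ext i; simp [hA, hB, hv, and_comm], Set.ncard_coe_finset]
  rw [show (∑ j ∈ Finset.Icc 1 l, ((j : ℝ) - 1) *
        ({i : Fin n | x i = 1 ∧ y i = (2 - (j : ℝ)) - (k0 : ℝ) / n}.ncard : ℝ))
      = ∑ j ∈ Finset.Icc 1 l, ((j : ℝ) - 1) * ((A j).card : ℝ) from
    Finset.sum_congr rfl fun j hj => by rw [hAcard j hj]]
  -- algebra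
  have hS0 : (∑ j ∈ Finset.Icc 1 l, ((k j : ℝ))) = n := by exact_mod_cast hsum
  have hS1 : (∑ j ∈ Finset.Icc 1 l, (j : ℝ) * (k j : ℝ)) = 2 * n - k0 - m := by
    exact_mod_cast hwsum
  have expand : (∑ j ∈ Finset.Icc 1 l,
        ((1 - v j) ^ 2 * ((A j).card : ℝ) + (v j) ^ 2 * ((k j : ℝ) - ((A j).card : ℝ))))
      = (∑ j ∈ Finset.Icc 1 l, (j : ℝ) ^ 2 * (k j : ℝ))
        + 2 * (∑ j ∈ Finset.Icc 1 l, ((j : ℝ) - 1) * ((A j).card : ℝ))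
        + (2 * ((k0:ℝ)/n) - 1) * (∑ j ∈ Finset.Icc 1 l, ((A j).card : ℝ))
        + (4 - 4 * ((k0:ℝ)/n) + ((k0:ℝ)/n) ^ 2) * (∑ j ∈ Finset.Icc 1 l, ((k j : ℝ)))
        + (2 * ((k0:ℝ)/n) - 4) * (∑ j ∈ Finset.Icc 1 l, (j : ℝ) * (k j : ℝ)) := by
    simp only [Finset.mul_sum, ← Finset.sum_add_distrib]
    exact Finset.sum_congr rfl fun j _ => by simp only [hv]; ring
  rw [expand, hsumA, hS0, hS1]
  field_simp
  ring
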